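/- The set π_n^n(X,*) of rank-n homotopy classes of smooth n-loops in X is a group under the operation [ℓ₁]·[ℓ₂] = [ℓ₁ ⋆ ℓ₂]: this operation is well defined on rank-n homotopy classes, it is associative, the class of the constant loop at * is a two-sided identity, and for every smooth n-loop ℓ the class of the reverse ℓ̄ is a two-sided inverse of the class of ℓ. -/

import Mathlib

/-!
STATEMENT 9: the set of rank-n homotopy classes of smooth n-loops is a group under
concatenation, with the constant loop as identity and reversal as inversion.
-/

open scoped Manifold

noncomputable section

/-- A smooth `n`-loop in a manifold `X` based at `x₀`: a map `[0,1]ⁿ → X` which is smooth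
in the sense that it extends to a `C^∞` map on an open neighbourhood of the cube, and which
equals `x₀` whenever some coordinate lies in `[0,ε) ∪ (1-ε,1]`. -/
structure SmoothNLoop {E HM : Type*} [NormedAddCommGroup E] [NormedSpace ℝ E]
    [TopologicalSpace HM] (IM : ModelWithCorners ℝ E HM)
    (X : Type*) [TopologicalSpace X] [ChartedSpace HM X] (n : ℕ) (x₀ : X) : Type _ where
  toFun : (Fin n → ℝ) → X
  smooth : ∃ U : Set (Fin n → ℝ), IsOpen U ∧ Set.Icc 0 1 ⊆ U ∧
      ContMDiffOn 𝓘(ℝ, Fin n → ℝ) IM (⊤ : ℕ∞) toFun U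
  based : ∃ ε : ℝ, 0 < ε ∧ ∀ t ∈ Set.Icc (0 : Fin n → ℝ) 1,
      (∃ i, t i < ε ∨ 1 - ε < t i) → toFun t = x₀

/-- Rank-`n` (thin) homotopy of smooth `n`-loops: a homotopy `K : [0,1] × [0,1]ⁿ → X`,
smooth on an open neighbourhood of its domain, which is based (condition 1), starts at `ℓ₁`
(condition 2), ends at `ℓ₂` (condition 3), and whose total differential has rank `≤ n`
throughout its domain (condition 4). -/
def ThinHomotopic {E HM : Type*} [NormedAddCommGroup E] [NormedSpace ℝ E]
    [TopologicalSpace HM] {IM : ModelWithCorners ℝ E HM}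
    {X : Type*} [TopologicalSpace X] [ChartedSpace HM X] {n : ℕ} {x₀ : X}
    (ℓ₁ ℓ₂ : SmoothNLoop IM X n x₀) : Prop :=
  ∃ (K : ℝ × (Fin n → ℝ) → X) (ε : ℝ), 0 < ε ∧
    (∃ U : Set (ℝ × (Fin n → ℝ)), IsOpen U ∧
        Set.Icc (0 : ℝ) 1 ×ˢ Set.Icc (0 : Fin n → ℝ) 1 ⊆ U ∧
        ContMDiffOn 𝓘(ℝ, ℝ × (Fin n → ℝ)) IM (⊤ : ℕ∞) K U) ∧
    (∀ s ∈ Set.Icc (0 : ℝ) 1, ∀ t ∈ Set.Icc (0 : Fin n → ℝ) 1,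
        (∃ i, t i < ε ∨ 1 - ε < t i) → K (s, t) = x₀) ∧
    (∀ s ∈ Set.Icc (0 : ℝ) 1, ∀ t ∈ Set.Icc (0 : Fin n → ℝ) 1,
        s < ε → K (s, t) = ℓ₁.toFun t) ∧
    (∀ s ∈ Set.Icc (0 : ℝ) 1, ∀ t ∈ Set.Icc (0 : Fin n → ℝ) 1,
        1 - ε < s → K (s, t) = ℓ₂.toFun t) ∧
    (∀ p ∈ Set.Icc (0 : ℝ) 1 ×ˢ Set.Icc (0 : Fin n → ℝ) 1,
        LinearMap.rank (mfderiv 𝓘(ℝ, ℝ × (Fin n → ℝ)) IM K p).toLinearMap ≤ (n : Cardinal))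

/-- The unit cube `[0,1]ⁿ`. -/
def Cube (n : ℕ) : Set (Fin n → ℝ) := Set.Icc 0 1

/-- The concatenation `ℓ₁ ⋆ ℓ₂` (in the first cube coordinate) of two `n`-loops, as a
formula on the cube: `ℓ₁(2t₁, t₂, …)` for `t₁ ≤ 1/2`, and `ℓ₂(2t₁ - 1, t₂, …)` for
`t₁ ≥ 1/2`. -/
def concatFun {X : Type*} {n : ℕ} (hn : 0 < n) (f g : (Fin n → ℝ) → X) :
    (Fin n → ℝ) → X := fun t =>
  if t ⟨0, hn⟩ ≤ 1 / 2 then f (Function.update t ⟨0, hn⟩ (2 * t ⟨0, hn⟩))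
  else g (Function.update t ⟨0, hn⟩ (2 * t ⟨0, hn⟩ - 1))

/-- The reverse `ℓ̄` of an `n`-loop: `ℓ̄(t₁, t₂, …) = ℓ(1 - t₁, t₂, …)`. -/
def reverseFun {X : Type*} {n : ℕ} (hn : 0 < n) (f : (Fin n → ℝ) → X) :
    (Fin n → ℝ) → X := fun t =>
  f (Function.update t ⟨0, hn⟩ (1 - t ⟨0, hn⟩))


namespace Pinn
open Real Set Function Filter

/-- smooth squash: 0 below δ, identity on [2δ,1-2δ], 1 above 1-δ, maps ℝ into [0,1]. -/
def sq (δ x : ℝ) : ℝ :=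
  smoothTransition ((x - δ)/δ) *
    (smoothTransition (((1-δ) - x)/δ) * x + (1 - smoothTransition (((1-δ) - x)/δ)))

variable {δ x : ℝ}

lemma sq_contDiff (hδ : 0 < δ) : ContDiff ℝ (⊤ : ℕ∞) (sq δ) := by
  have h1 : ContDiff ℝ (⊤ : ℕ∞) (fun x : ℝ => (x - δ)/δ) :=
    (contDiff_id.sub contDiff_const).div_const _
  have h2 : ContDiff ℝ (⊤ : ℕ∞) (fun x : ℝ => ((1-δ) - x)/δ) :=
    (contDiff_const.sub contDiff_id).div_const _
  exact (Real.smoothTransition.contDiff.comp h1).mul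
    (((Real.smoothTransition.contDiff.comp h2).mul contDiff_id).add
      (contDiff_const.sub (Real.smoothTransition.contDiff.comp h2)))

lemma sq_zero (hδ : 0 < δ) (h : x ≤ δ) : sq δ x = 0 := by
  unfold sq
  rw [Real.smoothTransition.zero_of_nonpos
    (div_nonpos_of_nonpos_of_nonneg (by linarith) hδ.le)]
  ring

lemma sq_one (hδ : 0 < δ) (hδ' : δ ≤ 1/8) (h : 1 - δ ≤ x) : sq δ x = 1 := by
  unfold sq
  rw [Real.smoothTransition.one_of_one_le (by rw [le_div_iff₀ hδ]; linarith),
    Real.smoothTransition.zero_of_nonpos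
      (div_nonpos_of_nonpos_of_nonneg (by linarith) hδ.le)]
  ring

lemma sq_id (hδ : 0 < δ) (hδ' : δ ≤ 1/8) (h1 : 2*δ ≤ x) (h2 : x ≤ 1 - 2*δ) :
    sq δ x = x := by
  unfold sq
  rw [Real.smoothTransition.one_of_one_le (by rw [le_div_iff₀ hδ]; linarith),
    Real.smoothTransition.one_of_one_le (by rw [le_div_iff₀ hδ]; linarith)]
  ring

lemma sq_mem (hδ : 0 < δ) (hδ' : δ ≤ 1/8) : sq δ x ∈ Icc (0:ℝ) 1 := by
  rcases le_or_gt x δ with h | h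
  · rw [sq_zero hδ h]; exact ⟨le_rfl, zero_le_one⟩
  rcases le_or_gt (1-δ) x with h' | h'
  · rw [sq_one hδ hδ' h']; exact ⟨zero_le_one, le_rfl⟩
  · have hx0 : (0:ℝ) ≤ x := by linarith
    have hx1 : x ≤ 1 := by linarith
    unfold sq
    have b0 := Real.smoothTransition.nonneg ((x - δ)/δ)
    have b1 := Real.smoothTransition.le_one ((x - δ)/δ)
    have c0 := Real.smoothTransition.nonneg (((1-δ) - x)/δ)
    have c1 := Real.smoothTransition.le_one (((1-δ) - x)/δ)
    have hC0 : 0 ≤ smoothTransition (((1-δ) - x)/δ) * x + (1 - smoothTransition (((1-δ) - x)/δ)) := by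
      nlinarith [mul_nonneg c0 hx0]
    have hC1 : smoothTransition (((1-δ) - x)/δ) * x + (1 - smoothTransition (((1-δ) - x)/δ)) ≤ 1 := by
      nlinarith [mul_nonneg c0 (sub_nonneg.2 hx1)]
    constructor
    · exact mul_nonneg b0 hC0
    · nlinarith [mul_le_mul b1 hC1 hC0 zero_le_one]

/-- on `[0, 2δ]` the squash stays in `[0, 2δ]`. -/
lemma sq_low (hδ : 0 < δ) (hδ' : δ ≤ 1/8) (h0 : 0 ≤ x) (h : x ≤ 2*δ) :
    sq δ x ≤ 2*δ := by
  rcases le_or_gt x δ with h1 | h1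
  · rw [sq_zero hδ h1]; linarith
  · unfold sq
    rw [Real.smoothTransition.one_of_one_le (show (1:ℝ) ≤ ((1-δ) - x)/δ by
      rw [le_div_iff₀ hδ]; linarith)]
    have b0 := Real.smoothTransition.nonneg ((x - δ)/δ)
    have b1 := Real.smoothTransition.le_one ((x - δ)/δ)
    nlinarith

/-- above `1 - 2δ` the squash stays above `1 - 2δ`. -/
lemma sq_high (hδ : 0 < δ) (hδ' : δ ≤ 1/8) (h : 1 - 2*δ ≤ x) :
    1 - 2*δ ≤ sq δ x := by
  rcases le_or_gt (1-δ) x with h1 | h1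
  · rw [sq_one hδ hδ' h1]; linarith
  · unfold sq
    rw [Real.smoothTransition.one_of_one_le (show (1:ℝ) ≤ (x - δ)/δ by
      rw [le_div_iff₀ hδ]; linarith)]
    have := Real.smoothTransition.nonneg (((1-δ) - x)/δ)
    have := Real.smoothTransition.le_one (((1-δ) - x)/δ)
    nlinarith



/-! scalar reparametrization helpers -/

/-- smooth time rescaling: 0 for `s ≤ δ`, 1 for `s ≥ 1-δ`, values in `[0,1]`. -/
def tr (δ s : ℝ) : ℝ := smoothTransition ((s - δ)/(1 - 2*δ))

lemma tr_contDiff (hδ' : δ ≤ 1/8) : ContDiff ℝ (⊤ : ℕ∞) (tr δ) :=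
  Real.smoothTransition.contDiff.comp ((contDiff_id.sub contDiff_const).div_const _)

lemma tr_zero (hδ' : δ ≤ 1/8) (h : x ≤ δ) : tr δ x = 0 :=
  Real.smoothTransition.zero_of_nonpos
    (div_nonpos_of_nonpos_of_nonneg (by linarith) (by linarith))

lemma tr_one (hδ' : δ ≤ 1/8) (h : 1 - δ ≤ x) : tr δ x = 1 :=
  Real.smoothTransition.one_of_one_le (by rw [le_div_iff₀ (by linarith)]; linarith)

lemma tr_mem : tr δ x ∈ Icc (0:ℝ) 1 :=
  ⟨Real.smoothTransition.nonneg _, Real.smoothTransition.le_one _⟩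

/-- smooth approximation of `max · 0`: equal to `0` on `(-∞,0]`, to `id` on `[δ,∞)`,
and satisfying `0 ≤ ms δ v ≤ max v 0` everywhere. -/
def ms (δ v : ℝ) : ℝ := v * smoothTransition (v/δ)

lemma ms_contDiff (hδ : 0 < δ) : ContDiff ℝ (⊤ : ℕ∞) (ms δ) :=
  contDiff_id.mul (Real.smoothTransition.contDiff.comp (contDiff_id.div_const _))

lemma ms_zero (hδ : 0 < δ) (h : x ≤ 0) : ms δ x = 0 := by
  rcases h.eq_or_lt with h | h
  · rw [ms, h, zero_mul]
  · rw [ms, Real.smoothTransition.zero_of_nonpos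
      (div_nonpos_of_nonpos_of_nonneg h.le hδ.le), mul_zero]

lemma ms_id (hδ : 0 < δ) (h : δ ≤ x) : ms δ x = x := by
  rw [ms, Real.smoothTransition.one_of_one_le (by rw [le_div_iff₀ hδ]; linarith), mul_one]

lemma ms_nonneg (hδ : 0 < δ) : 0 ≤ ms δ x := by
  rcases le_or_gt x 0 with h|h
  · rw [ms_zero hδ h]
  · exact mul_nonneg h.le (Real.smoothTransition.nonneg _)

lemma ms_le (hδ : 0 < δ) (h : 0 ≤ x) : ms δ x ≤ x := by
  have := Real.smoothTransition.le_one (x/δ)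
  have := Real.smoothTransition.nonneg (x/δ)
  rw [ms]; nlinarith

/-- smooth tent map: `2u` for `u ≤ (1-δ)/2`, `2-2u` for `u ≥ (1+δ)/2`, in `[1-δ, 1+δ]`
in between. -/
def Tm (δ u : ℝ) : ℝ :=
  (2*u) * (1 - smoothTransition ((u - (1-δ)/2)/δ)) +
    (2 - 2*u) * smoothTransition ((u - (1-δ)/2)/δ)

lemma Tm_contDiff (hδ : 0 < δ) : ContDiff ℝ (⊤ : ℕ∞) (Tm δ) := by
  have h1 : ContDiff ℝ (⊤:ℕ∞) (fun u : ℝ => (u - (1-δ)/2)/δ) :=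
    (contDiff_id.sub contDiff_const).div_const _
  exact ((contDiff_const.mul contDiff_id).mul
      (contDiff_const.sub (Real.smoothTransition.contDiff.comp h1))).add
    ((contDiff_const.sub (contDiff_const.mul contDiff_id)).mul
      (Real.smoothTransition.contDiff.comp h1))

lemma Tm_low (hδ : 0 < δ) (h : x ≤ (1-δ)/2) : Tm δ x = 2*x := by
  rw [Tm, Real.smoothTransition.zero_of_nonpos
    (div_nonpos_of_nonpos_of_nonneg (by linarith) hδ.le)]
  ring

lemma Tm_high (hδ : 0 < δ) (h : (1+δ)/2 ≤ x) : Tm δ x = 2 - 2*x := by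
  rw [Tm, Real.smoothTransition.one_of_one_le (by rw [le_div_iff₀ hδ]; linarith)]
  ring

lemma Tm_mid (hδ : 0 < δ) (h1 : (1-δ)/2 ≤ x) (h2 : x ≤ (1+δ)/2) :
    1 - δ ≤ Tm δ x ∧ Tm δ x ≤ 1 + δ := by
  have b0 := Real.smoothTransition.nonneg ((x - (1-δ)/2)/δ)
  have b1 := Real.smoothTransition.le_one ((x - (1-δ)/2)/δ)
  constructor <;> [skip; skip] <;> rw [Tm] <;> nlinarith

/-- smooth version of the associativity reparametrization. -/
def gsm (δ u : ℝ) : ℝ :=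
  u/2 + smoothTransition ((u - (1/2 - δ))/(2*δ)) * (u/2 - 1/4) +
    smoothTransition ((u - (3/4 - δ))/(2*δ)) * (u - 3/4)

lemma gsm_contDiff (hδ : 0 < δ) : ContDiff ℝ (⊤ : ℕ∞) (gsm δ) := by
  have h1 : ContDiff ℝ (⊤:ℕ∞) (fun u : ℝ => (u - (1/2 - δ))/(2*δ)) :=
    (contDiff_id.sub contDiff_const).div_const _
  have h2 : ContDiff ℝ (⊤:ℕ∞) (fun u : ℝ => (u - (3/4 - δ))/(2*δ)) :=
    (contDiff_id.sub contDiff_const).div_const _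
  exact ((contDiff_id.div_const _).add
      ((Real.smoothTransition.contDiff.comp h1).mul
        ((contDiff_id.div_const _).sub contDiff_const))).add
    ((Real.smoothTransition.contDiff.comp h2).mul (contDiff_id.sub contDiff_const))

lemma gsm_one (hδ : 0 < δ) (hδ' : δ ≤ 1/8) (h : x ≤ 1/2 - δ) : gsm δ x = x/2 := by
  rw [gsm, Real.smoothTransition.zero_of_nonpos
      (div_nonpos_of_nonpos_of_nonneg (by linarith) (by linarith)),
    Real.smoothTransition.zero_of_nonpos
      (div_nonpos_of_nonpos_of_nonneg (by linarith) (by linarith))]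
  ring

lemma gsm_two (hδ : 0 < δ) (hδ' : δ ≤ 1/8) (h1 : 1/2 + δ ≤ x) (h2 : x ≤ 3/4 - δ) :
    gsm δ x = x - 1/4 := by
  rw [gsm, Real.smoothTransition.one_of_one_le
      (show (1:ℝ) ≤ (x - (1/2 - δ))/(2*δ) by rw [le_div_iff₀ (by linarith)]; linarith),
    Real.smoothTransition.zero_of_nonpos
      (div_nonpos_of_nonpos_of_nonneg (by linarith) (by linarith))]
  ring

lemma gsm_three (hδ : 0 < δ) (hδ' : δ ≤ 1/8) (h : 3/4 + δ ≤ x) : gsm δ x = 2*x - 1 := by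
  rw [gsm, Real.smoothTransition.one_of_one_le
      (show (1:ℝ) ≤ (x - (1/2 - δ))/(2*δ) by rw [le_div_iff₀ (by linarith)]; linarith),
    Real.smoothTransition.one_of_one_le
      (show (1:ℝ) ≤ (x - (3/4 - δ))/(2*δ) by rw [le_div_iff₀ (by linarith)]; linarith)]
  ring

lemma gsm_mid1 (hδ : 0 < δ) (hδ' : δ ≤ 1/8) (h1 : 1/2 - δ ≤ x) (h2 : x ≤ 1/2 + δ) :
    1/4 - δ ≤ gsm δ x ∧ gsm δ x ≤ 1/4 + δ := by
  have b0 := Real.smoothTransition.nonneg ((x - (1/2 - δ))/(2*δ))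
  have b1 := Real.smoothTransition.le_one ((x - (1/2 - δ))/(2*δ))
  rw [gsm, Real.smoothTransition.zero_of_nonpos
    (show (x - (3/4 - δ))/(2*δ) ≤ 0 from
      div_nonpos_of_nonpos_of_nonneg (by linarith) (by linarith))]
  constructor <;> nlinarith

lemma gsm_mid2 (hδ : 0 < δ) (hδ' : δ ≤ 1/8) (h1 : 3/4 - δ ≤ x) (h2 : x ≤ 3/4 + δ) :
    1/2 - 2*δ ≤ gsm δ x ∧ gsm δ x ≤ 1/2 + 2*δ := by
  have b0 := Real.smoothTransition.nonneg ((x - (3/4 - δ))/(2*δ))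
  have b1 := Real.smoothTransition.le_one ((x - (3/4 - δ))/(2*δ))
  rw [gsm, Real.smoothTransition.one_of_one_le
    (show (1:ℝ) ≤ (x - (1/2 - δ))/(2*δ) by rw [le_div_iff₀ (by linarith)]; linarith)]
  constructor <;> nlinarith


/-! geometric infrastructure -/

section Geom

variable {n : ℕ}

/-- coordinatewise squash of `ℝⁿ` into the cube. -/
def Sq (δ : ℝ) (t : Fin n → ℝ) : Fin n → ℝ := fun i => sq δ (t i)

lemma Sq_contDiff (hδ : 0 < δ) : ContDiff ℝ (⊤ : ℕ∞) (Sq (n := n) δ) :=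
  contDiff_pi.2 fun i => (sq_contDiff hδ).comp (contDiff_apply ℝ ℝ i)

lemma mem_cube {t : Fin n → ℝ} : t ∈ Cube n ↔ ∀ i, 0 ≤ t i ∧ t i ≤ 1 := by
  simp only [Cube, Set.mem_Icc, Pi.le_def]
  constructor
  · exact fun h i => ⟨h.1 i, h.2 i⟩
  · exact fun h => ⟨fun i => (h i).1, fun i => (h i).2⟩

lemma Sq_mem_cube (hδ : 0 < δ) (hδ' : δ ≤ 1/8) (t : Fin n → ℝ) : Sq δ t ∈ Cube n :=
  mem_cube.2 fun i => ⟨(sq_mem hδ hδ').1, (sq_mem hδ hδ').2⟩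

lemma update_mem_cube {t : Fin n → ℝ} {i0 : Fin n} {v : ℝ} (ht : t ∈ Cube n)
    (h0 : 0 ≤ v) (h1 : v ≤ 1) : Function.update t i0 v ∈ Cube n := by
  rw [mem_cube] at ht ⊢
  intro i
  rcases eq_or_ne i i0 with rfl | h
  · simpa using ⟨h0, h1⟩
  · simpa [Function.update_of_ne h] using ht i

lemma contDiff_update_comp {F' : Type*} [NormedAddCommGroup F'] [NormedSpace ℝ F']
    (i0 : Fin n) {g : F' → ℝ} {T : F' → (Fin n → ℝ)}
    (hg : ContDiff ℝ (⊤:ℕ∞) g) (hT : ContDiff ℝ (⊤:ℕ∞) T) :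
    ContDiff ℝ (⊤:ℕ∞) (fun p => Function.update (T p) i0 (g p)) := by
  rw [contDiff_pi]
  intro i
  rcases eq_or_ne i i0 with rfl | h
  · simpa [Function.update_self] using hg
  · simpa [Function.update_of_ne h, Function.comp_def] using (contDiff_apply ℝ ℝ i).comp hT

end Geom

section Mfd

variable {E HM : Type*} [NormedAddCommGroup E] [NormedSpace ℝ E]
    [TopologicalSpace HM] {IM : ModelWithCorners ℝ E HM}
    {X : Type*} [TopologicalSpace X] [ChartedSpace HM X] [IsManifold IM (⊤ : ℕ∞) X]
    {n : ℕ} {x₀ : X}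

/-- case analysis for a piecewise function glued along a hypersurface on whose
neighbourhood both branches are constant. -/
lemma glue_cases {α : Type*} [TopologicalSpace α] {f g : α → ℝ}
    (hf : Continuous f) (hg : Continuous g)
    {Fn Gn : α → X} {W : Set α} (hW : IsOpen W)
    (hWeq : ∀ p, f p = g p → p ∈ W)
    (hWF : ∀ p ∈ W, Fn p = x₀) (hWG : ∀ p ∈ W, Gn p = x₀) (p : α) :
    (fun q => if f q ≤ g q then Fn q else Gn q) =ᶠ[nhds p] Fn ∨
    (fun q => if f q ≤ g q then Fn q else Gn q) =ᶠ[nhds p] Gn ∨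
    (fun q => if f q ≤ g q then Fn q else Gn q) =ᶠ[nhds p] fun _ => x₀ := by
  rcases lt_trichotomy (f p) (g p) with h | h | h
  · left
    filter_upwards [(isOpen_lt hf hg).mem_nhds h] with q hq
    simp [le_of_lt hq]
  · right; right
    filter_upwards [hW.mem_nhds (hWeq p h)] with q hq
    by_cases h' : f q ≤ g q <;> simp [h', hWF q hq, hWG q hq]
  · right; left
    filter_upwards [(isOpen_lt hg hf).mem_nhds h] with q hq
    simp [not_le.2 hq]

/-- rank of the differential of a composition through `ℝⁿ`-target map is at most the
rank of the outer differential. -/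
lemma comp_rank_le {F' F'' : Type*} [NormedAddCommGroup F'] [NormedSpace ℝ F']
    [NormedAddCommGroup F''] [NormedSpace ℝ F'']
    {L : F'' → X} {Φ : F' → F''} {p : F'}
    (hL : MDifferentiableAt 𝓘(ℝ, F'') IM L (Φ p))
    (hΦ : DifferentiableAt ℝ Φ p)
    (hr : LinearMap.rank (mfderiv 𝓘(ℝ, F'') IM L (Φ p)).toLinearMap ≤ (n : Cardinal)) :
    LinearMap.rank (mfderiv 𝓘(ℝ, F') IM (fun q => L (Φ q)) p).toLinearMap
      ≤ (n : Cardinal) := by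
  have h1 : mfderiv 𝓘(ℝ, F') IM (L ∘ Φ) p
      = (mfderiv 𝓘(ℝ, F'') IM L (Φ p)).comp (mfderiv 𝓘(ℝ, F') 𝓘(ℝ, F'') Φ p) :=
    mfderiv_comp p hL hΦ.mdifferentiableAt
  show LinearMap.rank (mfderiv 𝓘(ℝ, F') IM (L ∘ Φ) p).toLinearMap ≤ (n : Cardinal)
  rw [h1]
  exact le_trans (LinearMap.rank_comp_le_left _ _) hr

lemma one_le_coe_top : (1 : WithTop ℕ∞) ≤ ((⊤:ℕ∞) : WithTop ℕ∞) := by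
  exact_mod_cast le_top

/-- the differential of any map out of `ℝⁿ` has rank at most `n`. -/
lemma loop_rank_le {L : (Fin n → ℝ) → X} {v : Fin n → ℝ} :
    LinearMap.rank (mfderiv 𝓘(ℝ, Fin n → ℝ) IM L v).toLinearMap ≤ (n : Cardinal) := by
  have h := LinearMap.lift_rank_comp_le_right
    (LinearMap.id (R := ℝ) (M := Fin n → ℝ)) (mfderiv 𝓘(ℝ, Fin n → ℝ) IM L v).toLinearMap
  erw [LinearMap.comp_id, Cardinal.lift_uzero] at h
  refine h.trans ?_
  have h2 : LinearMap.rank (LinearMap.id (R := ℝ) (M := Fin n → ℝ)) = (n : Cardinal) := by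
    rw [LinearMap.rank, LinearMap.range_id, rank_top]
    exact rank_fin_fun n
  rw [h2, Cardinal.lift_natCast]

/-- smoothness and rank bound for compositions of a smooth loop with a smooth map. -/
lemma comp_loop_props {F' : Type*} [NormedAddCommGroup F'] [NormedSpace ℝ F']
    {L : (Fin n → ℝ) → X} (hL : ContMDiff 𝓘(ℝ, Fin n → ℝ) IM (⊤ : ℕ∞) L)
    {Φ : F' → Fin n → ℝ} (hΦ : ContDiff ℝ (⊤:ℕ∞) Φ) :
    ContMDiff 𝓘(ℝ, F') IM (⊤ : ℕ∞) (fun q => L (Φ q)) ∧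
    ∀ p : F', LinearMap.rank (mfderiv 𝓘(ℝ, F') IM (fun q => L (Φ q)) p).toLinearMap
      ≤ (n : Cardinal) := by
  constructor
  · exact hL.comp hΦ.contMDiff
  · intro p
    exact comp_rank_le (hL.mdifferentiableAt (by simp)) (hΦ.differentiable (by simp) p)
      loop_rank_le

/-- normalized representative of a smooth `n`-loop. -/
lemma loop_norm (a : SmoothNLoop IM X n x₀) :
    ∃ δ₀ : ℝ, 0 < δ₀ ∧ δ₀ ≤ 1/8 ∧ ∀ δ : ℝ, 0 < δ → δ ≤ δ₀ →
      ContMDiff 𝓘(ℝ, Fin n → ℝ) IM (⊤ : ℕ∞) (fun t => a.toFun (Sq δ t)) ∧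
      (∀ t ∈ Cube n, a.toFun (Sq δ t) = a.toFun t) ∧
      (∀ t : Fin n → ℝ, (∃ i, t i ≤ δ ∨ 1 - δ ≤ t i) → a.toFun (Sq δ t) = x₀) ∧
      (∀ t ∈ Cube n, (∃ i, t i ≤ 8*δ ∨ 1 - 8*δ ≤ t i) → a.toFun t = x₀) := by
  obtain ⟨U, hUo, hUsub, hUsm⟩ := a.smooth
  obtain ⟨ε, hε, hbase⟩ := a.based
  refine ⟨min (1/8) (ε/9), lt_min (by norm_num) (by linarith), min_le_left _ _,
    fun δ hδ hδle => ?_⟩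
  have hδ8 : δ ≤ 1/8 := hδle.trans (min_le_left _ _)
  have hδε : 9*δ ≤ ε := by
    have := hδle.trans (min_le_right _ _); linarith
  have hcube : ∀ t : Fin n → ℝ, Sq δ t ∈ Cube n := Sq_mem_cube hδ hδ8
  have hflat : ∀ t : Fin n → ℝ, (∃ i, t i ≤ δ ∨ 1 - δ ≤ t i) → a.toFun (Sq δ t) = x₀ := by
    intro t ⟨i, hi⟩
    refine hbase _ (hcube t) ⟨i, ?_⟩
    rcases hi with hi | hi
    · left; show sq δ (t i) < ε
      rw [sq_zero hδ hi]; linarith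
    · right; show 1 - ε < sq δ (t i)
      rw [sq_one hδ hδ8 hi]; linarith
  refine ⟨?_, ?_, hflat, ?_⟩
  · exact hUsm.comp_contMDiff ((Sq_contDiff hδ).contMDiff) fun t => hUsub (hcube t)
  · intro t ht
    by_cases hmid : ∀ i, 2*δ ≤ t i ∧ t i ≤ 1 - 2*δ
    · have : Sq δ t = t := funext fun i => sq_id hδ hδ8 (hmid i).1 (hmid i).2
      rw [this]
    · push_neg at hmid
      obtain ⟨i, hi⟩ := hmid
      have hti := mem_cube.1 ht i
      rcases le_or_gt (2*δ) (t i) with h1 | h1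
      · have h2 : 1 - 2*δ < t i := hi h1
        rw [hbase t ht ⟨i, Or.inr (by linarith)⟩,
          hbase _ (hcube t) ⟨i, Or.inr ?_⟩]
        show 1 - ε < sq δ (t i)
        have := sq_high hδ hδ8 (le_of_lt h2)
        linarith
      · rw [hbase t ht ⟨i, Or.inl (by linarith)⟩,
          hbase _ (hcube t) ⟨i, Or.inl ?_⟩]
        show sq δ (t i) < ε
        have := sq_low hδ hδ8 hti.1 (le_of_lt h1)
        linarith
  · intro t ht ⟨i, hi⟩
    have hti := mem_cube.1 ht i
    refine hbase t ht ⟨i, ?_⟩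
    rcases hi with hi | hi
    · left; linarith
    · right; linarith

/-- normalized representative of a rank-`n` homotopy. -/
lemma hom_norm {a b : SmoothNLoop IM X n x₀} (h : ThinHomotopic a b) :
    ∃ δ₀ : ℝ, 0 < δ₀ ∧ δ₀ ≤ 1/8 ∧ ∀ δ : ℝ, 0 < δ → δ ≤ δ₀ →
      ∃ Kf : ℝ × (Fin n → ℝ) → X,
        ContMDiff 𝓘(ℝ, ℝ × (Fin n → ℝ)) IM (⊤ : ℕ∞) Kf ∧
        (∀ (s : ℝ) (t : Fin n → ℝ), (∃ i, t i ≤ δ ∨ 1 - δ ≤ t i) → Kf (s, t) = x₀) ∧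
        (∀ s : ℝ, s ≤ δ → ∀ t ∈ Cube n, Kf (s, t) = a.toFun t) ∧
        (∀ s : ℝ, 1 - δ ≤ s → ∀ t ∈ Cube n, Kf (s, t) = b.toFun t) ∧
        (∀ p : ℝ × (Fin n → ℝ),
          LinearMap.rank (mfderiv 𝓘(ℝ, ℝ × (Fin n → ℝ)) IM Kf p).toLinearMap
            ≤ (n : Cardinal)) := by
  obtain ⟨K, ε, hε, ⟨U, hUo, hUsub, hUsm⟩, hK1, hK2, hK3, hK4⟩ := h
  obtain ⟨δa, hδa, hδa8, ha⟩ := loop_norm a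
  obtain ⟨δb, hδb, hδb8, hb⟩ := loop_norm b
  refine ⟨min (min (1/8) (ε/5)) (min δa δb),
    lt_min (lt_min (by norm_num) (by linarith)) (lt_min hδa hδb),
    ((min_le_left _ _).trans (min_le_left _ _)), fun δ hδ hδle => ?_⟩
  have hδ8 : δ ≤ 1/8 := hδle.trans ((min_le_left _ _).trans (min_le_left _ _))
  have hδε : 5*δ ≤ ε := by
    have := hδle.trans ((min_le_left _ _).trans (min_le_right _ _)); linarith
  obtain ⟨-, hacube, -, -⟩ := ha δ hδ (hδle.trans ((min_le_right _ _).trans (min_le_left _ _)))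
  obtain ⟨-, hbcube, -, -⟩ := hb δ hδ (hδle.trans ((min_le_right _ _).trans (min_le_right _ _)))
  set Φ : ℝ × (Fin n → ℝ) → ℝ × (Fin n → ℝ) := fun p => (sq δ p.1, Sq δ p.2) with hΦdef
  have hΦsm : ContDiff ℝ (⊤:ℕ∞) Φ :=
    ((sq_contDiff hδ).comp contDiff_fst).prodMk ((Sq_contDiff hδ).comp contDiff_snd)
  have hΦmem : ∀ p, Φ p ∈ Set.Icc (0:ℝ) 1 ×ˢ Set.Icc (0 : Fin n → ℝ) 1 := by
    intro p
    exact ⟨sq_mem hδ hδ8, Sq_mem_cube hδ hδ8 p.2⟩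
  refine ⟨fun p => K (Φ p), hUsm.comp_contMDiff hΦsm.contMDiff fun p => hUsub (hΦmem p),
    ?_, ?_, ?_, ?_⟩
  · intro s t ⟨i, hi⟩
    refine hK1 _ (sq_mem hδ hδ8) _ (Sq_mem_cube hδ hδ8 t) ⟨i, ?_⟩
    rcases hi with hi | hi
    · left; show sq δ (t i) < ε
      rw [sq_zero hδ hi]; linarith
    · right; show 1 - ε < sq δ (t i)
      rw [sq_one hδ hδ8 hi]; linarith
  · intro s hs t ht
    have h0 : sq δ s = 0 := sq_zero hδ hs
    show K (sq δ s, Sq δ t) = a.toFun t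
    rw [h0, hK2 0 (by norm_num) _ (Sq_mem_cube hδ hδ8 t) (by linarith), hacube t ht]
  · intro s hs t ht
    have h0 : sq δ s = 1 := sq_one hδ hδ8 hs
    show K (sq δ s, Sq δ t) = b.toFun t
    rw [h0, hK3 1 (by norm_num) _ (Sq_mem_cube hδ hδ8 t) (by linarith), hbcube t ht]
  · intro p
    refine comp_rank_le ?_ (hΦsm.differentiable (by simp) p)
      (hK4 _ (hΦmem p))
    have : ContMDiffAt 𝓘(ℝ, ℝ × (Fin n → ℝ)) IM (⊤:ℕ∞) K (Φ p) :=
      hUsm.contMDiffAt (hUo.mem_nhds (hUsub (hΦmem p)))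
    exact this.mdifferentiableAt (by simp)

lemma thin_of_global {ℓ₁ ℓ₂ : SmoothNLoop IM X n x₀} (K : ℝ × (Fin n → ℝ) → X) (ε : ℝ)
    (hε : 0 < ε)
    (hsm : ContMDiff 𝓘(ℝ, ℝ × (Fin n → ℝ)) IM (⊤:ℕ∞) K)
    (h1 : ∀ s ∈ Set.Icc (0:ℝ) 1, ∀ t ∈ Set.Icc (0 : Fin n → ℝ) 1,
      (∃ i, t i < ε ∨ 1 - ε < t i) → K (s,t) = x₀)
    (h2 : ∀ s ∈ Set.Icc (0:ℝ) 1, ∀ t ∈ Set.Icc (0 : Fin n → ℝ) 1,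
      s < ε → K (s, t) = ℓ₁.toFun t)
    (h3 : ∀ s ∈ Set.Icc (0:ℝ) 1, ∀ t ∈ Set.Icc (0 : Fin n → ℝ) 1,
      1 - ε < s → K (s, t) = ℓ₂.toFun t)
    (h4 : ∀ p ∈ Set.Icc (0 : ℝ) 1 ×ˢ Set.Icc (0 : Fin n → ℝ) 1,
      LinearMap.rank (mfderiv 𝓘(ℝ, ℝ × (Fin n → ℝ)) IM K p).toLinearMap ≤ (n : Cardinal)) :
    ThinHomotopic ℓ₁ ℓ₂ :=
  ⟨K, ε, hε, ⟨Set.univ, isOpen_univ, Set.subset_univ _, hsm.contMDiffOn⟩, h1, h2, h3, h4⟩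

lemma part1 (hn : 0 < n) (a b : SmoothNLoop IM X n x₀) :
    ∃ c : SmoothNLoop IM X n x₀,
      ∀ t ∈ Cube n, c.toFun t = concatFun hn a.toFun b.toFun t := by
  obtain ⟨δ1, h10, h18, ha⟩ := loop_norm a
  obtain ⟨δ2, h20, h28, hb⟩ := loop_norm b
  set δ := min δ1 δ2 with hδdef
  have hδ0 : 0 < δ := lt_min h10 h20
  have hδ8 : δ ≤ 1/8 := le_trans (min_le_left _ _) h18
  obtain ⟨hAsm, hAcube, hAflat, -⟩ := ha δ hδ0 (min_le_left _ _)
  obtain ⟨hBsm, hBcube, hBflat, -⟩ := hb δ hδ0 (min_le_right _ _)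
  set i0 : Fin n := ⟨0, hn⟩ with hi0
  set ΦA : (Fin n → ℝ) → (Fin n → ℝ) := fun t => Function.update t i0 (2 * t i0) with hΦA
  set ΦB : (Fin n → ℝ) → (Fin n → ℝ) := fun t => Function.update t i0 (2 * t i0 - 1) with hΦB
  have hΦAsm : ContDiff ℝ (⊤:ℕ∞) ΦA :=
    contDiff_update_comp i0 (contDiff_const.mul (contDiff_apply ℝ ℝ i0)) contDiff_id
  have hΦBsm : ContDiff ℝ (⊤:ℕ∞) ΦB :=
    contDiff_update_comp i0 ((contDiff_const.mul (contDiff_apply ℝ ℝ i0)).sub contDiff_const)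
      contDiff_id
  set cF : (Fin n → ℝ) → X := fun t =>
    if t i0 ≤ 1/2 then a.toFun (Sq δ (ΦA t)) else b.toFun (Sq δ (ΦB t)) with hcF
  have hWopen : IsOpen ((fun t : Fin n → ℝ => t i0) ⁻¹' Set.Ioo (1/2 - δ/4) (1/2 + δ/4)) :=
    (isOpen_Ioo).preimage (continuous_apply i0)
  have hWF : ∀ p ∈ ((fun t : Fin n → ℝ => t i0) ⁻¹' Set.Ioo (1/2 - δ/4) (1/2 + δ/4)),
      a.toFun (Sq δ (ΦA p)) = x₀ := by
    intro p hp
    refine hAflat _ ⟨i0, Or.inr ?_⟩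
    have : ΦA p i0 = 2 * p i0 := Function.update_self _ _ _
    rw [this]
    have := hp.1
    linarith
  have hWG : ∀ p ∈ ((fun t : Fin n → ℝ => t i0) ⁻¹' Set.Ioo (1/2 - δ/4) (1/2 + δ/4)),
      b.toFun (Sq δ (ΦB p)) = x₀ := by
    intro p hp
    refine hBflat _ ⟨i0, Or.inl ?_⟩
    have : ΦB p i0 = 2 * p i0 - 1 := Function.update_self _ _ _
    rw [this]
    have := hp.2
    linarith
  have key : ∀ p : Fin n → ℝ,
      cF =ᶠ[nhds p] (fun t => a.toFun (Sq δ (ΦA t))) ∨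
      cF =ᶠ[nhds p] (fun t => b.toFun (Sq δ (ΦB t))) ∨
      cF =ᶠ[nhds p] fun _ => x₀ := by
    intro p
    exact glue_cases (f := fun t : Fin n → ℝ => t i0) (g := fun _ => (1:ℝ)/2)
      (continuous_apply i0) continuous_const hWopen
      (fun q hq => ⟨by beta_reduce; rw [hq]; linarith, by beta_reduce; rw [hq]; linarith⟩) hWF hWG p
  have hAc := comp_loop_props (n := n) hAsm hΦAsm
  have hBc := comp_loop_props (n := n) hBsm hΦBsm
  have hcFsm : ContMDiff 𝓘(ℝ, Fin n → ℝ) IM (⊤:ℕ∞) cF := by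
    intro p
    rcases key p with h | h | h
    · exact ((hAc.1 p).congr_of_eventuallyEq h)
    · exact ((hBc.1 p).congr_of_eventuallyEq h)
    · exact (contMDiffAt_const.congr_of_eventuallyEq h)
  refine ⟨⟨cF, ⟨Set.univ, isOpen_univ, Set.subset_univ _, hcFsm.contMDiffOn⟩,
    ⟨δ/4, by positivity, ?_⟩⟩, ?_⟩
  · -- basedness
    intro t ht ⟨i, hi⟩
    have hti := (mem_cube (n := n)).1 ht i
    have ht0 := (mem_cube (n := n)).1 ht i0
    show cF t = x₀
    by_cases hc : t i0 ≤ 1/2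
    · rw [hcF]; simp only [if_pos hc]
      rcases eq_or_ne i i0 with rfl | hne
      · rcases hi with hi | hi
        · refine hAflat _ ⟨i0, Or.inl ?_⟩
          rw [show ΦA t i0 = 2 * t i0 from Function.update_self _ _ _]
          linarith
        · exfalso; linarith
      · refine hAflat _ ⟨i, ?_⟩
        rw [show ΦA t i = t i from Function.update_of_ne hne _ _]
        rcases hi with hi | hi
        · exact Or.inl (by linarith)
        · exact Or.inr (by linarith)
    · rw [hcF]; simp only [if_neg hc]
      push_neg at hc
      rcases eq_or_ne i i0 with rfl | hne
      · rcases hi with hi | hi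
        · exfalso; linarith
        · refine hBflat _ ⟨i0, Or.inr ?_⟩
          rw [show ΦB t i0 = 2 * t i0 - 1 from Function.update_self _ _ _]
          linarith
      · refine hBflat _ ⟨i, ?_⟩
        rw [show ΦB t i = t i from Function.update_of_ne hne _ _]
        rcases hi with hi | hi
        · exact Or.inl (by linarith)
        · exact Or.inr (by linarith)
  · -- equality with the concatenation formula on the cube
    intro t ht
    have ht0 := (mem_cube (n := n)).1 ht i0
    show cF t = concatFun hn a.toFun b.toFun t
    rw [hcF, concatFun]
    by_cases hc : t i0 ≤ 1/2
    · simp only [← hi0, if_pos hc]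
      exact hAcube _ (update_mem_cube ht (by linarith) (by linarith))
    · simp only [← hi0, if_neg hc]
      push_neg at hc
      exact hBcube _ (update_mem_cube ht (by linarith) (by linarith))

lemma part2 (hn : 0 < n) (a a' b b' c c' : SmoothNLoop IM X n x₀)
    (haa : ThinHomotopic a a') (hbb : ThinHomotopic b b')
    (hc : ∀ t ∈ Cube n, c.toFun t = concatFun hn a.toFun b.toFun t)
    (hc' : ∀ t ∈ Cube n, c'.toFun t = concatFun hn a'.toFun b'.toFun t) :
    ThinHomotopic c c' := by
  obtain ⟨δ1, h10, h18, hKa⟩ := hom_norm haa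
  obtain ⟨δ2, h20, h28, hKb⟩ := hom_norm hbb
  set δ := min δ1 δ2 with hδdef
  have hδ0 : 0 < δ := lt_min h10 h20
  have hδ8 : δ ≤ 1/8 := le_trans (min_le_left _ _) h18
  obtain ⟨Ka, hKasm, hKaflat, hKa0, hKa1, hKarank⟩ := hKa δ hδ0 (min_le_left _ _)
  obtain ⟨Kb, hKbsm, hKbflat, hKb0, hKb1, hKbrank⟩ := hKb δ hδ0 (min_le_right _ _)
  set i0 : Fin n := ⟨0, hn⟩ with hi0
  set ΦA : ℝ × (Fin n → ℝ) → ℝ × (Fin n → ℝ) :=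
    fun p => (p.1, Function.update p.2 i0 (2 * p.2 i0)) with hΦA
  set ΦB : ℝ × (Fin n → ℝ) → ℝ × (Fin n → ℝ) :=
    fun p => (p.1, Function.update p.2 i0 (2 * p.2 i0 - 1)) with hΦB
  have happ : ContDiff ℝ (⊤:ℕ∞) (fun p : ℝ × (Fin n → ℝ) => p.2 i0) :=
    (contDiff_apply ℝ ℝ i0).comp contDiff_snd
  have hΦAsm : ContDiff ℝ (⊤:ℕ∞) ΦA :=
    contDiff_fst.prodMk (contDiff_update_comp i0 (contDiff_const.mul happ) contDiff_snd)
  have hΦBsm : ContDiff ℝ (⊤:ℕ∞) ΦB :=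
    contDiff_fst.prodMk
      (contDiff_update_comp i0 ((contDiff_const.mul happ).sub contDiff_const) contDiff_snd)
  set K : ℝ × (Fin n → ℝ) → X := fun p =>
    if p.2 i0 ≤ 1/2 then Ka (ΦA p) else Kb (ΦB p) with hK
  have hWopen : IsOpen ((fun p : ℝ × (Fin n → ℝ) => p.2 i0) ⁻¹'
      Set.Ioo (1/2 - δ/4) (1/2 + δ/4)) := (isOpen_Ioo).preimage happ.continuous
  have hWF : ∀ p ∈ ((fun p : ℝ × (Fin n → ℝ) => p.2 i0) ⁻¹'
      Set.Ioo (1/2 - δ/4) (1/2 + δ/4)), Ka (ΦA p) = x₀ := by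
    intro p hp
    refine hKaflat p.1 _ ⟨i0, Or.inr ?_⟩
    rw [show Function.update p.2 i0 (2 * p.2 i0) i0 = 2 * p.2 i0 from
      Function.update_self _ _ _]
    have := hp.1; linarith
  have hWG : ∀ p ∈ ((fun p : ℝ × (Fin n → ℝ) => p.2 i0) ⁻¹'
      Set.Ioo (1/2 - δ/4) (1/2 + δ/4)), Kb (ΦB p) = x₀ := by
    intro p hp
    refine hKbflat p.1 _ ⟨i0, Or.inl ?_⟩
    rw [show Function.update p.2 i0 (2 * p.2 i0 - 1) i0 = 2 * p.2 i0 - 1 from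
      Function.update_self _ _ _]
    have := hp.2; linarith
  have key : ∀ p : ℝ × (Fin n → ℝ),
      K =ᶠ[nhds p] (fun q => Ka (ΦA q)) ∨
      K =ᶠ[nhds p] (fun q => Kb (ΦB q)) ∨
      K =ᶠ[nhds p] fun _ => x₀ := by
    intro p
    exact glue_cases (f := fun p : ℝ × (Fin n → ℝ) => p.2 i0) (g := fun _ => (1:ℝ)/2)
      happ.continuous continuous_const hWopen
      (fun q hq => ⟨by beta_reduce; rw [hq]; linarith, by beta_reduce; rw [hq]; linarith⟩) hWF hWG p
  have hKsm : ContMDiff 𝓘(ℝ, ℝ × (Fin n → ℝ)) IM (⊤:ℕ∞) K := by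
    intro p
    rcases key p with h | h | h
    · exact ((hKasm.comp hΦAsm.contMDiff) p).congr_of_eventuallyEq h
    · exact ((hKbsm.comp hΦBsm.contMDiff) p).congr_of_eventuallyEq h
    · exact contMDiffAt_const.congr_of_eventuallyEq h
  refine thin_of_global K (δ/4) (by positivity) hKsm ?_ ?_ ?_ ?_
  · -- based
    intro s hs t ht ⟨i, hi⟩
    have hti := (mem_cube (n := n)).1 ht i
    have ht0 := (mem_cube (n := n)).1 ht i0
    show K (s, t) = x₀
    by_cases hcnd : t i0 ≤ 1/2
    · rw [hK]; simp only [if_pos hcnd]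
      rcases eq_or_ne i i0 with rfl | hne
      · rcases hi with hi | hi
        · refine hKaflat _ _ ⟨i0, Or.inl ?_⟩
          rw [show Function.update t i0 (2 * t i0) i0 = 2 * t i0 from
            Function.update_self _ _ _]
          linarith
        · exfalso; linarith
      · refine hKaflat _ _ ⟨i, ?_⟩
        rw [show Function.update t i0 (2 * t i0) i = t i from Function.update_of_ne hne _ _]
        rcases hi with hi | hi
        · exact Or.inl (by linarith)
        · exact Or.inr (by linarith)
    · rw [hK]; simp only [if_neg hcnd]
      push_neg at hcnd
      rcases eq_or_ne i i0 with rfl | hne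
      · rcases hi with hi | hi
        · exfalso; linarith
        · refine hKbflat _ _ ⟨i0, Or.inr ?_⟩
          rw [show Function.update t i0 (2 * t i0 - 1) i0 = 2 * t i0 - 1 from
            Function.update_self _ _ _]
          linarith
      · refine hKbflat _ _ ⟨i, ?_⟩
        rw [show Function.update t i0 (2 * t i0 - 1) i = t i from
          Function.update_of_ne hne _ _]
        rcases hi with hi | hi
        · exact Or.inl (by linarith)
        · exact Or.inr (by linarith)
  · -- start
    intro s hs t ht hsδ
    have ht0 := (mem_cube (n := n)).1 ht i0
    have hsδ' : s ≤ δ := by linarith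
    show K (s, t) = c.toFun t
    rw [hc t ht, hK, concatFun]
    by_cases hcnd : t i0 ≤ 1/2
    · simp only [← hi0, if_pos hcnd]
      exact hKa0 s hsδ' _ (update_mem_cube ht (by linarith) (by linarith))
    · simp only [← hi0, if_neg hcnd]
      push_neg at hcnd
      exact hKb0 s hsδ' _ (update_mem_cube ht (by linarith) (by linarith))
  · -- end
    intro s hs t ht hsδ
    have ht0 := (mem_cube (n := n)).1 ht i0
    have hsδ' : 1 - δ ≤ s := by linarith
    show K (s, t) = c'.toFun t
    rw [hc' t ht, hK, concatFun]
    by_cases hcnd : t i0 ≤ 1/2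
    · simp only [← hi0, if_pos hcnd]
      exact hKa1 s hsδ' _ (update_mem_cube ht (by linarith) (by linarith))
    · simp only [← hi0, if_neg hcnd]
      push_neg at hcnd
      exact hKb1 s hsδ' _ (update_mem_cube ht (by linarith) (by linarith))
  · -- rank
    intro p hp
    rcases key p with h | h | h
    · rw [h.mfderiv_eq]
      exact comp_rank_le (hKasm.mdifferentiableAt (by simp))
        (hΦAsm.differentiable (by simp) p) (hKarank (ΦA p))
    · rw [h.mfderiv_eq]
      exact comp_rank_le (hKbsm.mdifferentiableAt (by simp))
        (hΦBsm.differentiable (by simp) p) (hKbrank (ΦB p))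
    · rw [h.mfderiv_eq, mfderiv_const]
      simp only [ContinuousLinearMap.coe_zero, LinearMap.rank_zero]
      exact (le_of_eq LinearMap.rank_zero).trans (Cardinal.zero_le _)

lemma reparam_props {L : (Fin n → ℝ) → X} (hL : ContMDiff 𝓘(ℝ, Fin n → ℝ) IM (⊤:ℕ∞) L)
    {g : ℝ × (Fin n → ℝ) → ℝ} (hg : ContDiff ℝ (⊤:ℕ∞) g) (i0 : Fin n) :
    ContMDiff 𝓘(ℝ, ℝ × (Fin n → ℝ)) IM (⊤:ℕ∞)
      (fun p => L (Function.update p.2 i0 (g p))) ∧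
    ∀ p : ℝ × (Fin n → ℝ), LinearMap.rank (mfderiv 𝓘(ℝ, ℝ × (Fin n → ℝ)) IM
        (fun p => L (Function.update p.2 i0 (g p))) p).toLinearMap ≤ (n:Cardinal) :=
  comp_loop_props hL (contDiff_update_comp i0 hg contDiff_snd)

lemma part5 (hn : 0 < n) (a ar aar ara e : SmoothNLoop IM X n x₀)
    (har : ∀ t ∈ Cube n, ar.toFun t = reverseFun hn a.toFun t)
    (haar : ∀ t ∈ Cube n, aar.toFun t = concatFun hn a.toFun ar.toFun t)
    (hara : ∀ t ∈ Cube n, ara.toFun t = concatFun hn ar.toFun a.toFun t)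
    (he : ∀ t ∈ Cube n, e.toFun t = x₀) :
    ThinHomotopic aar e ∧ ThinHomotopic ara e := by
  obtain ⟨δ1, h10, h18, ha⟩ := loop_norm a
  obtain ⟨δ2, h20, h28, hr⟩ := loop_norm ar
  set δ := min δ1 δ2 with hδdef
  have hδ0 : 0 < δ := lt_min h10 h20
  have hδ8 : δ ≤ 1/8 := le_trans (min_le_left _ _) h18
  obtain ⟨hAsm, hAcube, hAflat, haflat⟩ := ha δ hδ0 (min_le_left _ _)
  obtain ⟨hRsm, hRcube, hRflat, hrflat⟩ := hr δ hδ0 (min_le_right _ _)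
  set i0 : Fin n := ⟨0, hn⟩ with hi0
  set g : ℝ × (Fin n → ℝ) → ℝ := fun p => (1 - tr δ p.1) * Tm δ (p.2 i0) with hgdef
  have hgsm : ContDiff ℝ (⊤:ℕ∞) g :=
    ((contDiff_const.sub ((tr_contDiff hδ8).comp contDiff_fst)).mul
      ((Tm_contDiff hδ0).comp (((contDiff_apply ℝ ℝ i0).comp contDiff_snd))))
  -- generic facts about the reparametrization g
  have hg_base : ∀ (s : ℝ), ∀ t ∈ Cube n, (t i0 < δ/4 ∨ 1 - δ/4 < t i0) → g (s, t) ≤ δ := by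
    intro s t ht hti
    have ht0 := (mem_cube (n := n)).1 ht i0
    have htr := tr_mem (δ := δ) (x := s)
    rcases hti with hti | hti
    · have hTm : Tm δ (t i0) = 2 * t i0 := Tm_low hδ0 (by linarith)
      show (1 - tr δ s) * Tm δ (t i0) ≤ δ
      rw [hTm]; nlinarith [htr.1, htr.2]
    · have hTm : Tm δ (t i0) = 2 - 2 * t i0 := Tm_high hδ0 (by linarith)
      show (1 - tr δ s) * Tm δ (t i0) ≤ δ
      rw [hTm]; nlinarith [htr.1, htr.2]
  have hg_one : ∀ (s : ℝ), 1 - δ ≤ s → ∀ t : Fin n → ℝ, g (s, t) = 0 := by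
    intro s hs t
    show (1 - tr δ s) * Tm δ (t i0) = 0
    rw [tr_one hδ8 hs]; ring
  have hg_zero : ∀ (s : ℝ), s ≤ δ → ∀ t : Fin n → ℝ, g (s, t) = Tm δ (t i0) := by
    intro s hs t
    show (1 - tr δ s) * Tm δ (t i0) = Tm δ (t i0)
    rw [tr_zero hδ8 hs]; ring
  constructor
  · -- a ⋆ ā ≃ e
    set K : ℝ × (Fin n → ℝ) → X :=
      fun p => a.toFun (Sq δ (Function.update p.2 i0 (g p))) with hK
    have hprops := reparam_props (n := n) hAsm hgsm i0
    refine thin_of_global K (δ/4) (by positivity) hprops.1 ?_ ?_ ?_ (fun p _ => hprops.2 p)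
    · -- based
      intro s hs t ht ⟨i, hi⟩
      have hti := (mem_cube (n := n)).1 ht i
      show K (s, t) = x₀
      rcases eq_or_ne i i0 with rfl | hne
      · refine hAflat _ ⟨i0, Or.inl ?_⟩
        rw [Function.update_self]
        exact hg_base s t ht hi
      · refine hAflat _ ⟨i, ?_⟩
        rw [Function.update_of_ne hne]
        rcases hi with hi | hi
        · exact Or.inl (by linarith)
        · exact Or.inr (by linarith)
    · -- start : the concatenation a ⋆ ā
      intro s hs t ht hsδ
      have ht0 := (mem_cube (n := n)).1 ht i0
      show K (s, t) = aar.toFun t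
      rw [hK]
      simp only []
      rw [hg_zero s (by linarith) t, haar t ht, concatFun]
      simp only [← hi0]
      rcases le_or_gt (t i0) ((1-δ)/2) with hu | hu
      · rw [Tm_low hδ0 hu, if_pos (by linarith : t i0 ≤ 1/2)]
        exact hAcube _ (update_mem_cube ht (by linarith) (by linarith))
      rcases le_or_gt ((1+δ)/2) (t i0) with hu2 | hu2
      · rw [Tm_high hδ0 hu2, if_neg (by push_neg; linarith : ¬ t i0 ≤ 1/2)]
        have hL : a.toFun (Sq δ (Function.update t i0 (2 - 2 * t i0)))
            = a.toFun (Function.update t i0 (2 - 2 * t i0)) :=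
          hAcube _ (update_mem_cube ht (by linarith) (by linarith))
        rw [hL, har _ (update_mem_cube ht (by linarith) (by linarith)), reverseFun]
        simp only [← hi0, Function.update_self, Function.update_idem]
        rw [show 1 - (2 * t i0 - 1) = 2 - 2 * t i0 by ring]
      · -- middle region : both sides are the basepoint
        have hmid := Tm_mid hδ0 (le_of_lt hu) (le_of_lt hu2)
        have hL : a.toFun (Sq δ (Function.update t i0 (Tm δ (t i0)))) = x₀ := by
          refine hAflat _ ⟨i0, Or.inr ?_⟩
          rw [Function.update_self]
          exact hmid.1
        rw [hL]
        by_cases hcnd : t i0 ≤ 1/2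
        · rw [if_pos hcnd]
          exact (haflat _ (update_mem_cube ht (by linarith) (by linarith))
            ⟨i0, Or.inr (by rw [Function.update_self]; linarith)⟩).symm
        · rw [if_neg hcnd]
          push_neg at hcnd
          exact (hrflat _ (update_mem_cube ht (by linarith) (by linarith))
            ⟨i0, Or.inl (by rw [Function.update_self]; linarith)⟩).symm
    · -- end : the constant loop
      intro s hs t ht hsδ
      show K (s, t) = e.toFun t
      rw [he t ht]
      refine hAflat _ ⟨i0, Or.inl ?_⟩
      rw [Function.update_self, hg_one s (by linarith) t]
      linarith
  · -- ā ⋆ a ≃ e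
    set K : ℝ × (Fin n → ℝ) → X :=
      fun p => ar.toFun (Sq δ (Function.update p.2 i0 (g p))) with hK
    have hprops := reparam_props (n := n) hRsm hgsm i0
    refine thin_of_global K (δ/4) (by positivity) hprops.1 ?_ ?_ ?_ (fun p _ => hprops.2 p)
    · intro s hs t ht ⟨i, hi⟩
      have hti := (mem_cube (n := n)).1 ht i
      show K (s, t) = x₀
      rcases eq_or_ne i i0 with rfl | hne
      · refine hRflat _ ⟨i0, Or.inl ?_⟩
        rw [Function.update_self]
        exact hg_base s t ht hi
      · refine hRflat _ ⟨i, ?_⟩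
        rw [Function.update_of_ne hne]
        rcases hi with hi | hi
        · exact Or.inl (by linarith)
        · exact Or.inr (by linarith)
    · intro s hs t ht hsδ
      have ht0 := (mem_cube (n := n)).1 ht i0
      show K (s, t) = ara.toFun t
      rw [hK]
      simp only []
      rw [hg_zero s (by linarith) t, hara t ht, concatFun]
      simp only [← hi0]
      rcases le_or_gt (t i0) ((1-δ)/2) with hu | hu
      · rw [Tm_low hδ0 hu, if_pos (by linarith : t i0 ≤ 1/2)]
        exact hRcube _ (update_mem_cube ht (by linarith) (by linarith))
      rcases le_or_gt ((1+δ)/2) (t i0) with hu2 | hu2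
      · rw [Tm_high hδ0 hu2, if_neg (by push_neg; linarith : ¬ t i0 ≤ 1/2)]
        have hL : ar.toFun (Sq δ (Function.update t i0 (2 - 2 * t i0)))
            = ar.toFun (Function.update t i0 (2 - 2 * t i0)) :=
          hRcube _ (update_mem_cube ht (by linarith) (by linarith))
        rw [hL, har _ (update_mem_cube ht (by linarith) (by linarith)), reverseFun]
        simp only [← hi0, Function.update_self, Function.update_idem]
        rw [show 1 - (2 - 2 * t i0) = 2 * t i0 - 1 by ring]
      · have hmid := Tm_mid hδ0 (le_of_lt hu) (le_of_lt hu2)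
        have hL : ar.toFun (Sq δ (Function.update t i0 (Tm δ (t i0)))) = x₀ := by
          refine hRflat _ ⟨i0, Or.inr ?_⟩
          rw [Function.update_self]
          exact hmid.1
        rw [hL]
        by_cases hcnd : t i0 ≤ 1/2
        · rw [if_pos hcnd]
          exact (hrflat _ (update_mem_cube ht (by linarith) (by linarith))
            ⟨i0, Or.inr (by rw [Function.update_self]; linarith)⟩).symm
        · rw [if_neg hcnd]
          push_neg at hcnd
          exact (haflat _ (update_mem_cube ht (by linarith) (by linarith))
            ⟨i0, Or.inl (by rw [Function.update_self]; linarith)⟩).symm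
    · intro s hs t ht hsδ
      show K (s, t) = e.toFun t
      rw [he t ht]
      refine hRflat _ ⟨i0, Or.inl ?_⟩
      rw [Function.update_self, hg_one s (by linarith) t]
      linarith

lemma part4 (hn : 0 < n) (a ea ae : SmoothNLoop IM X n x₀)
    (hea : ∀ t ∈ Cube n, ea.toFun t = concatFun hn (fun _ => x₀) a.toFun t)
    (hae : ∀ t ∈ Cube n, ae.toFun t = concatFun hn a.toFun (fun _ => x₀) t) :
    ThinHomotopic ea a ∧ ThinHomotopic ae a := by
  obtain ⟨δ1, h10, h18, ha⟩ := loop_norm a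
  set δ := δ1 with hδdef
  have hδ0 : 0 < δ := h10
  have hδ8 : δ ≤ 1/8 := h18
  obtain ⟨hAsm, hAcube, hAflat, haflat⟩ := ha δ hδ0 le_rfl
  set i0 : Fin n := ⟨0, hn⟩ with hi0
  have htr : ∀ s : ℝ, tr δ s ∈ Set.Icc (0:ℝ) 1 := fun s => tr_mem
  constructor
  · -- e ⋆ a ≃ a
    set g : ℝ × (Fin n → ℝ) → ℝ :=
      fun p => ms δ (1 + (2 - tr δ p.1) * (p.2 i0 - 1)) with hgdef
    have hgsm : ContDiff ℝ (⊤:ℕ∞) g := by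
      refine (ms_contDiff hδ0).comp ?_
      exact contDiff_const.add (((contDiff_const.sub
        ((tr_contDiff hδ8).comp contDiff_fst))).mul
        ((((contDiff_apply ℝ ℝ i0).comp contDiff_snd)).sub contDiff_const))
    set K : ℝ × (Fin n → ℝ) → X :=
      fun p => a.toFun (Sq δ (Function.update p.2 i0 (g p))) with hK
    have hprops := reparam_props (n := n) hAsm hgsm i0
    refine thin_of_global K (δ/4) (by positivity) hprops.1 ?_ ?_ ?_ (fun p _ => hprops.2 p)
    · -- based
      intro s hs t ht ⟨i, hi⟩
      have hti := (mem_cube (n := n)).1 ht i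
      have ht0 := (mem_cube (n := n)).1 ht i0
      have hk := htr s
      show K (s, t) = x₀
      rcases eq_or_ne i i0 with rfl | hne
      · rcases hi with hi | hi
        · refine hAflat _ ⟨i0, Or.inl ?_⟩
          rw [Function.update_self]
          have hl : 1 + (2 - tr δ s) * (t i0 - 1) ≤ t i0 := by nlinarith [hk.1, hk.2]
          rcases le_or_gt (1 + (2 - tr δ s) * (t i0 - 1)) 0 with h0 | h0
          · rw [show g (s, t) = ms δ (1 + (2 - tr δ s) * (t i0 - 1)) from rfl,
              ms_zero hδ0 h0]; linarith
          · refine le_trans (ms_le hδ0 h0.le) (by linarith)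
        · refine hAflat _ ⟨i0, Or.inr ?_⟩
          rw [Function.update_self]
          have hl : 2 * t i0 - 1 ≤ 1 + (2 - tr δ s) * (t i0 - 1) := by
            nlinarith [hk.1, hk.2]
          rw [show g (s, t) = ms δ (1 + (2 - tr δ s) * (t i0 - 1)) from rfl,
            ms_id hδ0 (by linarith)]
          linarith
      · refine hAflat _ ⟨i, ?_⟩
        rw [Function.update_of_ne hne]
        rcases hi with hi | hi
        · exact Or.inl (by linarith)
        · exact Or.inr (by linarith)
    · -- start : e ⋆ a
      intro s hs t ht hsδ
      have ht0 := (mem_cube (n := n)).1 ht i0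
      show a.toFun (Sq δ (Function.update t i0
        (ms δ (1 + (2 - tr δ s) * (t i0 - 1))))) = ea.toFun t
      rw [tr_zero hδ8 (by linarith : s ≤ δ),
        show 1 + (2 - 0) * (t i0 - 1) = 2 * t i0 - 1 by ring, hea t ht, concatFun]
      simp only [← hi0]
      rcases le_or_gt (t i0) (1/2) with hu | hu
      · rw [if_pos hu, ms_zero hδ0 (by linarith)]
        exact hAflat _ ⟨i0, Or.inl (by rw [Function.update_self]; linarith)⟩
      rcases le_or_gt (t i0) ((1+δ)/2) with hu2 | hu2
      · rw [if_neg (by push_neg; linarith : ¬ t i0 ≤ 1/2)]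
        have hL : a.toFun (Sq δ (Function.update t i0 (ms δ (2 * t i0 - 1)))) = x₀ := by
          refine hAflat _ ⟨i0, Or.inl ?_⟩
          rw [Function.update_self]
          exact le_trans (ms_le hδ0 (by linarith)) (by linarith)
        rw [hL]
        exact (haflat _ (update_mem_cube ht (by linarith) (by linarith))
          ⟨i0, Or.inl (by rw [Function.update_self]; linarith)⟩).symm
      · rw [if_neg (by push_neg; linarith : ¬ t i0 ≤ 1/2), ms_id hδ0 (by linarith)]
        exact hAcube _ (update_mem_cube ht (by linarith) (by linarith))
    · -- end : a
      intro s hs t ht hsδ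
      have ht0 := (mem_cube (n := n)).1 ht i0
      show a.toFun (Sq δ (Function.update t i0
        (ms δ (1 + (2 - tr δ s) * (t i0 - 1))))) = a.toFun t
      rw [tr_one hδ8 (by linarith : 1 - δ ≤ s),
        show 1 + (2 - 1) * (t i0 - 1) = t i0 by ring]
      rcases le_or_gt δ (t i0) with hu | hu
      · rw [ms_id hδ0 hu, Function.update_eq_self]
        exact hAcube t ht
      · have hL : a.toFun (Sq δ (Function.update t i0 (ms δ (t i0)))) = x₀ := by
          refine hAflat _ ⟨i0, Or.inl ?_⟩
          rw [Function.update_self]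
          exact le_trans (ms_le hδ0 ht0.1) hu.le
        rw [hL]
        exact (haflat t ht ⟨i0, Or.inl (by linarith)⟩).symm
  · -- a ⋆ e ≃ a
    set g : ℝ × (Fin n → ℝ) → ℝ :=
      fun p => 1 - ms δ (1 - (2 - tr δ p.1) * p.2 i0) with hgdef
    have hgsm : ContDiff ℝ (⊤:ℕ∞) g := by
      refine contDiff_const.sub ((ms_contDiff hδ0).comp ?_)
      exact contDiff_const.sub ((contDiff_const.sub
        ((tr_contDiff hδ8).comp contDiff_fst)).mul
        ((contDiff_apply ℝ ℝ i0).comp contDiff_snd))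
    set K : ℝ × (Fin n → ℝ) → X :=
      fun p => a.toFun (Sq δ (Function.update p.2 i0 (g p))) with hK
    have hprops := reparam_props (n := n) hAsm hgsm i0
    refine thin_of_global K (δ/4) (by positivity) hprops.1 ?_ ?_ ?_ (fun p _ => hprops.2 p)
    · -- based
      intro s hs t ht ⟨i, hi⟩
      have hti := (mem_cube (n := n)).1 ht i
      have ht0 := (mem_cube (n := n)).1 ht i0
      have hk := htr s
      show K (s, t) = x₀
      rcases eq_or_ne i i0 with rfl | hne
      · rcases hi with hi | hi
        · refine hAflat _ ⟨i0, Or.inl ?_⟩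
          rw [Function.update_self,
            show g (s, t) = 1 - ms δ (1 - (2 - tr δ s) * t i0) from rfl,
            ms_id hδ0 (by nlinarith [hk.1, hk.2])]
          nlinarith [hk.1, hk.2]
        · refine hAflat _ ⟨i0, Or.inr ?_⟩
          rw [Function.update_self,
            show g (s, t) = 1 - ms δ (1 - (2 - tr δ s) * t i0) from rfl]
          have hm : 1 - (2 - tr δ s) * t i0 ≤ 1 - t i0 := by nlinarith [hk.1, hk.2]
          rcases le_or_gt (1 - (2 - tr δ s) * t i0) 0 with h0 | h0
          · rw [ms_zero hδ0 h0]; linarith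
          · have := ms_le hδ0 h0.le; linarith
      · refine hAflat _ ⟨i, ?_⟩
        rw [Function.update_of_ne hne]
        rcases hi with hi | hi
        · exact Or.inl (by linarith)
        · exact Or.inr (by linarith)
    · -- start : a ⋆ e
      intro s hs t ht hsδ
      have ht0 := (mem_cube (n := n)).1 ht i0
      show a.toFun (Sq δ (Function.update t i0
        (1 - ms δ (1 - (2 - tr δ s) * t i0)))) = ae.toFun t
      rw [tr_zero hδ8 (by linarith : s ≤ δ),
        show 1 - (2 - 0) * t i0 = 1 - 2 * t i0 by ring, hae t ht, concatFun]
      simp only [← hi0]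
      rcases le_or_gt (t i0) ((1-δ)/2) with hu | hu
      · rw [if_pos (by linarith : t i0 ≤ 1/2), ms_id hδ0 (by linarith),
          show 1 - (1 - 2 * t i0) = 2 * t i0 by ring]
        exact hAcube _ (update_mem_cube ht (by linarith) (by linarith))
      rcases le_or_gt (t i0) (1/2) with hu2 | hu2
      · rw [if_pos hu2]
        have hL : a.toFun (Sq δ (Function.update t i0 (1 - ms δ (1 - 2 * t i0)))) = x₀ := by
          refine hAflat _ ⟨i0, Or.inr ?_⟩
          rw [Function.update_self]
          have := ms_le hδ0 (by linarith : (0:ℝ) ≤ 1 - 2 * t i0)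
          linarith
        rw [hL]
        exact (haflat _ (update_mem_cube ht (by linarith) (by linarith))
          ⟨i0, Or.inr (by rw [Function.update_self]; linarith)⟩).symm
      · rw [if_neg (by push_neg; linarith : ¬ t i0 ≤ 1/2),
          ms_zero hδ0 (by linarith : 1 - 2 * t i0 ≤ 0)]
        exact hAflat _ ⟨i0, Or.inr (by rw [Function.update_self]; linarith)⟩
    · -- end : a
      intro s hs t ht hsδ
      have ht0 := (mem_cube (n := n)).1 ht i0
      show a.toFun (Sq δ (Function.update t i0
        (1 - ms δ (1 - (2 - tr δ s) * t i0)))) = a.toFun t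
      rw [tr_one hδ8 (by linarith : 1 - δ ≤ s),
        show 1 - (2 - 1) * t i0 = 1 - t i0 by ring]
      rcases le_or_gt (t i0) (1 - δ) with hu | hu
      · rw [ms_id hδ0 (by linarith), show (1:ℝ) - (1 - t i0) = t i0 by ring,
          Function.update_eq_self]
        exact hAcube t ht
      · have hL : a.toFun (Sq δ (Function.update t i0 (1 - ms δ (1 - t i0)))) = x₀ := by
          refine hAflat _ ⟨i0, Or.inr ?_⟩
          rw [Function.update_self]
          have := ms_le hδ0 (by linarith : (0:ℝ) ≤ 1 - t i0)
          linarith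
        rw [hL]
        exact (haflat t ht ⟨i0, Or.inr (by linarith)⟩).symm

set_option maxHeartbeats 2000000 in
lemma part3 (hn : 0 < n) (a b c ab bc abc₁ abc₂ : SmoothNLoop IM X n x₀)
    (hab : ∀ t ∈ Cube n, ab.toFun t = concatFun hn a.toFun b.toFun t)
    (hbc : ∀ t ∈ Cube n, bc.toFun t = concatFun hn b.toFun c.toFun t)
    (habc1 : ∀ t ∈ Cube n, abc₁.toFun t = concatFun hn ab.toFun c.toFun t)
    (habc2 : ∀ t ∈ Cube n, abc₂.toFun t = concatFun hn a.toFun bc.toFun t) :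
    ThinHomotopic abc₁ abc₂ := by
  obtain ⟨δ1, h10, h18, hla⟩ := loop_norm a
  obtain ⟨δ2, h20, h28, hlb⟩ := loop_norm b
  obtain ⟨δ3, h30, h38, hlc⟩ := loop_norm c
  obtain ⟨δ4, h40, h48, hld⟩ := loop_norm abc₁
  set δ := min (min δ1 δ2) (min δ3 δ4) with hδdef
  have hδ0 : 0 < δ := lt_min (lt_min h10 h20) (lt_min h30 h40)
  have hδ8 : δ ≤ 1/8 := le_trans ((min_le_left _ _).trans (min_le_left _ _)) h18
  obtain ⟨-, -, -, haflat⟩ := hla δ hδ0 ((min_le_left _ _).trans (min_le_left _ _))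
  obtain ⟨-, -, -, hbflat⟩ := hlb δ hδ0 ((min_le_left _ _).trans (min_le_right _ _))
  obtain ⟨-, -, -, hcflat⟩ := hlc δ hδ0 ((min_le_right _ _).trans (min_le_left _ _))
  obtain ⟨hDsm, hDcube, hDflat, -⟩ := hld δ hδ0 ((min_le_right _ _).trans (min_le_right _ _))
  set i0 : Fin n := ⟨0, hn⟩ with hi0
  set g : ℝ × (Fin n → ℝ) → ℝ :=
    fun p => (1 - tr δ p.1) * p.2 i0 + tr δ p.1 * gsm δ (p.2 i0) with hgdef
  have happ : ContDiff ℝ (⊤:ℕ∞) (fun p : ℝ × (Fin n → ℝ) => p.2 i0) :=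
    (contDiff_apply ℝ ℝ i0).comp contDiff_snd
  have hgsm : ContDiff ℝ (⊤:ℕ∞) g :=
    ((contDiff_const.sub ((tr_contDiff hδ8).comp contDiff_fst)).mul happ).add
      (((tr_contDiff hδ8).comp contDiff_fst).mul ((gsm_contDiff hδ0).comp happ))
  set K : ℝ × (Fin n → ℝ) → X :=
    fun p => abc₁.toFun (Sq δ (Function.update p.2 i0 (g p))) with hK
  have hprops := reparam_props (n := n) hDsm hgsm i0
  refine thin_of_global K (δ/4) (by positivity) hprops.1 ?_ ?_ ?_ (fun p _ => hprops.2 p)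
  · -- based
    intro s hs t ht ⟨i, hi⟩
    have hti := (mem_cube (n := n)).1 ht i
    have ht0 := (mem_cube (n := n)).1 ht i0
    have hk := tr_mem (δ := δ) (x := s)
    show K (s, t) = x₀
    rcases eq_or_ne i i0 with rfl | hne
    · rcases hi with hi | hi
      · refine hDflat _ ⟨i0, Or.inl ?_⟩
        rw [Function.update_self,
          show g (s, t) = (1 - tr δ s) * t i0 + tr δ s * gsm δ (t i0) from rfl,
          gsm_one hδ0 hδ8 (by linarith)]
        nlinarith [hk.1, hk.2]
      · refine hDflat _ ⟨i0, Or.inr ?_⟩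
        rw [Function.update_self,
          show g (s, t) = (1 - tr δ s) * t i0 + tr δ s * gsm δ (t i0) from rfl,
          gsm_three hδ0 hδ8 (by linarith)]
        nlinarith [hk.1, hk.2]
    · refine hDflat _ ⟨i, ?_⟩
      rw [Function.update_of_ne hne]
      rcases hi with hi | hi
      · exact Or.inl (by linarith)
      · exact Or.inr (by linarith)
  · -- start : (a ⋆ b) ⋆ c
    intro s hs t ht hsδ
    show abc₁.toFun (Sq δ (Function.update t i0
      ((1 - tr δ s) * t i0 + tr δ s * gsm δ (t i0)))) = abc₁.toFun t
    rw [tr_zero hδ8 (by linarith : s ≤ δ),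
      show (1 - 0) * t i0 + 0 * gsm δ (t i0) = t i0 by ring, Function.update_eq_self]
    exact hDcube t ht
  · -- end : a ⋆ (b ⋆ c)
    intro s hs t ht hsδ
    have ht0 := (mem_cube (n := n)).1 ht i0
    show abc₁.toFun (Sq δ (Function.update t i0
      ((1 - tr δ s) * t i0 + tr δ s * gsm δ (t i0)))) = abc₂.toFun t
    rw [tr_one hδ8 (by linarith : 1 - δ ≤ s),
      show (1 - 1) * t i0 + 1 * gsm δ (t i0) = gsm δ (t i0) by ring]
    rcases le_or_gt (t i0) (1/2 - δ) with hu | hu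
    · -- first region
      rw [gsm_one hδ0 hδ8 hu,
        hDcube _ (update_mem_cube ht (by linarith) (by linarith)),
        habc1 _ (update_mem_cube ht (by linarith) (by linarith)), concatFun]
      simp only [← hi0, Function.update_self, Function.update_idem]
      rw [if_pos (by linarith : t i0 / 2 ≤ 1/2),
        show 2 * (t i0 / 2) = t i0 by ring, Function.update_eq_self,
        hab t ht, habc2 t ht]
      simp only [concatFun, ← hi0]
      rw [if_pos (by linarith : t i0 ≤ 1/2), if_pos (by linarith : t i0 ≤ 1/2)]
    rcases lt_or_ge (t i0) (1/2 + δ) with hu2 | hu2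
    · -- strip around 1/2 : both sides are the basepoint
      have hv := gsm_mid1 (x := t i0) hδ0 hδ8 (by linarith) (by linarith)
      rw [hDcube _ (update_mem_cube ht (by linarith [hv.1]) (by linarith [hv.2])),
        habc1 _ (update_mem_cube ht (by linarith [hv.1]) (by linarith [hv.2])), concatFun]
      simp only [← hi0, Function.update_self, Function.update_idem]
      rw [if_pos (by linarith [hv.2] : gsm δ (t i0) ≤ 1/2),
        hab _ (update_mem_cube ht (by linarith [hv.1]) (by linarith [hv.2]))]
      simp only [concatFun, ← hi0, Function.update_self, Function.update_idem]
      have hR : abc₂.toFun t = x₀ := by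
        rw [habc2 t ht, concatFun]
        simp only [← hi0]
        rcases le_or_gt (t i0) (1/2) with hc2 | hc2
        · rw [if_pos hc2]
          exact haflat _ (update_mem_cube ht (by linarith) (by linarith))
            ⟨i0, Or.inr (by rw [Function.update_self]; linarith)⟩
        · rw [if_neg (by push_neg; linarith : ¬ t i0 ≤ 1/2),
            hbc _ (update_mem_cube ht (by linarith) (by linarith)), concatFun]
          simp only [← hi0, Function.update_self, Function.update_idem]
          rw [if_pos (by linarith : 2 * t i0 - 1 ≤ 1/2)]
          exact hbflat _ (update_mem_cube ht (by linarith) (by linarith))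
            ⟨i0, Or.inl (by rw [Function.update_self]; linarith)⟩
      rw [hR]
      rcases le_or_gt (2 * gsm δ (t i0)) (1/2) with hc1 | hc1
      · rw [if_pos hc1]
        exact haflat _ (update_mem_cube ht (by linarith [hv.1]) (by linarith))
          ⟨i0, Or.inr (by rw [Function.update_self]; linarith [hv.1])⟩
      · rw [if_neg (by push_neg; linarith : ¬ 2 * gsm δ (t i0) ≤ 1/2)]
        exact hbflat _ (update_mem_cube ht (by linarith) (by linarith [hv.2]))
          ⟨i0, Or.inl (by rw [Function.update_self]; linarith [hv.2])⟩
    rcases le_or_gt (t i0) (3/4 - δ) with hu3 | hu3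
    · -- second region
      rw [gsm_two hδ0 hδ8 (by linarith) hu3,
        hDcube _ (update_mem_cube ht (by linarith) (by linarith)),
        habc1 _ (update_mem_cube ht (by linarith) (by linarith)), concatFun]
      simp only [← hi0, Function.update_self, Function.update_idem]
      rw [if_pos (by linarith : t i0 - 1/4 ≤ 1/2),
        hab _ (update_mem_cube ht (by linarith) (by linarith))]
      simp only [concatFun, ← hi0, Function.update_self, Function.update_idem]
      rw [if_neg (by push_neg; linarith : ¬ 2 * (t i0 - 1/4) ≤ 1/2),
        habc2 t ht, concatFun]
      simp only [← hi0]
      rw [if_neg (by push_neg; linarith : ¬ t i0 ≤ 1/2),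
        hbc _ (update_mem_cube ht (by linarith) (by linarith)), concatFun]
      simp only [← hi0, Function.update_self, Function.update_idem]
      rw [if_pos (by linarith : 2 * t i0 - 1 ≤ 1/2),
        show 2 * (2 * (t i0 - 1/4)) - 1 = 2 * (2 * t i0 - 1) by ring]
    rcases lt_or_ge (t i0) (3/4 + δ) with hu4 | hu4
    · -- strip around 3/4 : both sides are the basepoint
      have hv := gsm_mid2 (x := t i0) hδ0 hδ8 (by linarith) (by linarith)
      rw [hDcube _ (update_mem_cube ht (by linarith [hv.1]) (by linarith [hv.2])),
        habc1 _ (update_mem_cube ht (by linarith [hv.1]) (by linarith [hv.2])), concatFun]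
      simp only [← hi0, Function.update_self, Function.update_idem]
      have hR : abc₂.toFun t = x₀ := by
        rw [habc2 t ht, concatFun]
        simp only [← hi0]
        rw [if_neg (by push_neg; linarith : ¬ t i0 ≤ 1/2),
          hbc _ (update_mem_cube ht (by linarith) (by linarith)), concatFun]
        simp only [← hi0, Function.update_self, Function.update_idem]
        rcases le_or_gt (2 * t i0 - 1) (1/2) with hc2 | hc2
        · rw [if_pos hc2]
          exact hbflat _ (update_mem_cube ht (by linarith) (by linarith))
            ⟨i0, Or.inr (by rw [Function.update_self]; linarith)⟩
        · rw [if_neg (by push_neg; linarith : ¬ 2 * t i0 - 1 ≤ 1/2)]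
          exact hcflat _ (update_mem_cube ht (by linarith) (by linarith))
            ⟨i0, Or.inl (by rw [Function.update_self]; linarith)⟩
      rw [hR]
      rcases le_or_gt (gsm δ (t i0)) (1/2) with hc1 | hc1
      · rw [if_pos hc1,
          hab _ (update_mem_cube ht (by linarith [hv.1]) (by linarith))]
        simp only [concatFun, ← hi0, Function.update_self, Function.update_idem]
        rcases le_or_gt (2 * gsm δ (t i0)) (1/2) with hd | hd
        · rw [if_pos hd]
          exact haflat _ (update_mem_cube ht (by linarith [hv.1]) (by linarith))
            ⟨i0, Or.inr (by rw [Function.update_self]; linarith [hv.1])⟩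
        · rw [if_neg (by push_neg; linarith : ¬ 2 * gsm δ (t i0) ≤ 1/2)]
          exact hbflat _ (update_mem_cube ht (by linarith) (by linarith))
            ⟨i0, Or.inr (by rw [Function.update_self]; linarith [hv.1])⟩
      · rw [if_neg (by push_neg; linarith : ¬ gsm δ (t i0) ≤ 1/2)]
        exact hcflat _ (update_mem_cube ht (by linarith) (by linarith [hv.2]))
          ⟨i0, Or.inl (by rw [Function.update_self]; linarith [hv.2])⟩
    · -- third region
      rw [gsm_three hδ0 hδ8 (by linarith),
        hDcube _ (update_mem_cube ht (by linarith) (by linarith)),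
        habc1 _ (update_mem_cube ht (by linarith) (by linarith)), concatFun]
      simp only [← hi0, Function.update_self, Function.update_idem]
      rw [if_neg (by push_neg; linarith : ¬ 2 * t i0 - 1 ≤ 1/2),
        habc2 t ht, concatFun]
      simp only [← hi0]
      rw [if_neg (by push_neg; linarith : ¬ t i0 ≤ 1/2),
        hbc _ (update_mem_cube ht (by linarith) (by linarith)), concatFun]
      simp only [← hi0, Function.update_self, Function.update_idem]
      rw [if_neg (by push_neg; linarith : ¬ 2 * t i0 - 1 ≤ 1/2),
        show 2 * (2 * t i0 - 1) - 1 = 2 * (2 * t i0 - 1) - 1 by ring]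

end Mfd
end Pinn

/-- `π_n^n(X,x₀)` is a group under `[ℓ₁]·[ℓ₂] = [ℓ₁ ⋆ ℓ₂]`: concatenations
of smooth `n`-loops exist as smooth `n`-loops, the operation is well defined on rank-`n`
homotopy classes and associative, the class of the constant loop is a two-sided identity,
and the class of the reverse loop is a two-sided inverse.  (A smooth `n`-loop `c`
represents `ℓ₁ ⋆ ℓ₂` iff it agrees with the concatenation formula on the cube.) -/
theorem pinn_group {E HM : Type*} [NormedAddCommGroup E] [NormedSpace ℝ E]
    [TopologicalSpace HM] (IM : ModelWithCorners ℝ E HM)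
    (X : Type*) [TopologicalSpace X] [ChartedSpace HM X] [IsManifold IM (⊤ : ℕ∞) X]
    (n : ℕ) (hn : 0 < n) (x₀ : X) :
    -- concatenations exist
    (∀ a b : SmoothNLoop IM X n x₀, ∃ c : SmoothNLoop IM X n x₀,
        ∀ t ∈ Cube n, c.toFun t = concatFun hn a.toFun b.toFun t) ∧
    -- the operation is well defined on rank-`n` homotopy classes
    (∀ a a' b b' c c' : SmoothNLoop IM X n x₀,
        ThinHomotopic a a' → ThinHomotopic b b' →
        (∀ t ∈ Cube n, c.toFun t = concatFun hn a.toFun b.toFun t) →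
        (∀ t ∈ Cube n, c'.toFun t = concatFun hn a'.toFun b'.toFun t) →
        ThinHomotopic c c') ∧
    -- associativity
    (∀ a b c ab bc abc₁ abc₂ : SmoothNLoop IM X n x₀,
        (∀ t ∈ Cube n, ab.toFun t = concatFun hn a.toFun b.toFun t) →
        (∀ t ∈ Cube n, bc.toFun t = concatFun hn b.toFun c.toFun t) →
        (∀ t ∈ Cube n, abc₁.toFun t = concatFun hn ab.toFun c.toFun t) →
        (∀ t ∈ Cube n, abc₂.toFun t = concatFun hn a.toFun bc.toFun t) →
        ThinHomotopic abc₁ abc₂) ∧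
    -- the class of the constant loop is a two-sided identity
    (∀ a ea ae : SmoothNLoop IM X n x₀,
        (∀ t ∈ Cube n, ea.toFun t = concatFun hn (fun _ => x₀) a.toFun t) →
        (∀ t ∈ Cube n, ae.toFun t = concatFun hn a.toFun (fun _ => x₀) t) →
        ThinHomotopic ea a ∧ ThinHomotopic ae a) ∧
    -- the class of the reverse is a two-sided inverse
    (∀ a ar aar ara e : SmoothNLoop IM X n x₀,
        (∀ t ∈ Cube n, ar.toFun t = reverseFun hn a.toFun t) →
        (∀ t ∈ Cube n, aar.toFun t = concatFun hn a.toFun ar.toFun t) →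
        (∀ t ∈ Cube n, ara.toFun t = concatFun hn ar.toFun a.toFun t) →
        (∀ t ∈ Cube n, e.toFun t = x₀) →
        ThinHomotopic aar e ∧ ThinHomotopic ara e) := by
  refine ⟨fun a b => Pinn.part1 hn a b,
    fun a a' b b' c c' haa hbb hc hc' => Pinn.part2 hn a a' b b' c c' haa hbb hc hc',
    fun a b c ab bc abc₁ abc₂ h1 h2 h3 h4 => Pinn.part3 hn a b c ab bc abc₁ abc₂ h1 h2 h3 h4,
    fun a ea ae h1 h2 => Pinn.part4 hn a ea ae h1 h2,
    fun a ar aar ara e h1 h2 h3 h4 => Pinn.part5 hn a ar aar ara e h1 h2 h3 h4⟩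

end
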